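/- Suppose Φ_x and Φ_u are block lower-triangular matrices satisfying (I − ZA) Φ_x − ZB Φ_u = I. Then Φ_x is invertible, K = Φ_u Φ_x⁻¹ is block lower-triangular, and the closed-loop responses induced by K equal Φ_x and Φ_u, i.e., (I − Z(A + BK))⁻¹ = Φ_x and K(I − Z(A + BK))⁻¹ = Φ_u. -/

import Mathlib

open Matrix

/-- The block-downshift operator: identity `n×n` blocks on the first block
subdiagonal, zeros elsewhere. -/
def blockDownshift (T n : ℕ) : Matrix (Fin T × Fin n) (Fin T × Fin n) ℝ :=
  fun p q => if (p.1 : ℕ) = (q.1 : ℕ) + 1 ∧ p.2 = q.2 then 1 else 0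

/-- A matrix partitioned in `T × T` blocks is block diagonal. -/
def IsBlockDiag {T n m : ℕ} (M : Matrix (Fin T × Fin n) (Fin T × Fin m) ℝ) : Prop :=
  ∀ (i j : Fin T) (a : Fin n) (b : Fin m), i ≠ j → M (i, a) (j, b) = 0

/-- A matrix partitioned in `T × T` blocks is block lower-triangular (causal). -/
def IsBlockLowerTri {T n m : ℕ} (M : Matrix (Fin T × Fin n) (Fin T × Fin m) ℝ) : Prop :=
  ∀ (i j : Fin T) (a : Fin n) (b : Fin m), i < j → M (i, a) (j, b) = 0

/-- `Z * M * L` is strictly block lower when `M` is block diagonal and `L` block lower. -/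
lemma strict_lower {T n k l : ℕ}
    (M : Matrix (Fin T × Fin n) (Fin T × Fin k) ℝ)
    (L : Matrix (Fin T × Fin k) (Fin T × Fin l) ℝ)
    (hM : IsBlockDiag M) (hL : IsBlockLowerTri L)
    (p : Fin T × Fin n) (q : Fin T × Fin l) (hpq : (p.1 : ℕ) ≤ (q.1 : ℕ)) :
    (blockDownshift T n * M * L) p q = 0 := by
  rw [Matrix.mul_apply]
  apply Finset.sum_eq_zero
  intro s _
  rw [Matrix.mul_apply]
  rcases lt_or_ge (s.1 : ℕ) (q.1 : ℕ) with h | h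
  · rw [hL s.1 q.1 s.2 q.2 (by exact_mod_cast h), mul_zero]
  · rw [Finset.sum_eq_zero, zero_mul]
    intro r _
    by_cases hz : (p.1 : ℕ) = (r.1 : ℕ) + 1 ∧ p.2 = r.2
    · rw [hM r.1 s.1 r.2 s.2 (by
        intro he
        rw [he] at hz
        omega), mul_zero]
    · simp [blockDownshift, hz]

theorem sls_realization {T n m : ℕ}
    (A : Matrix (Fin T × Fin n) (Fin T × Fin n) ℝ)
    (B : Matrix (Fin T × Fin n) (Fin T × Fin m) ℝ)
    (Φx : Matrix (Fin T × Fin n) (Fin T × Fin n) ℝ)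
    (Φu : Matrix (Fin T × Fin m) (Fin T × Fin n) ℝ)
    (hA : IsBlockDiag A) (hB : IsBlockDiag B)
    (hΦx : IsBlockLowerTri Φx) (hΦu : IsBlockLowerTri Φu)
    (hach : (1 - blockDownshift T n * A) * Φx - blockDownshift T n * B * Φu = 1) :
    IsUnit Φx ∧
    IsBlockLowerTri (Φu * Φx⁻¹) ∧
    (1 - blockDownshift T n * (A + B * (Φu * Φx⁻¹)))⁻¹ = Φx ∧
    (Φu * Φx⁻¹) * (1 - blockDownshift T n * (A + B * (Φu * Φx⁻¹)))⁻¹ = Φu := by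
  set Z := blockDownshift T n with hZ
  -- Φx = 1 + strictly lower part
  have hsplit : Φx = 1 + (Z * A * Φx + Z * B * Φu) := by
    have : Φx - Z * A * Φx - Z * B * Φu = 1 := by
      rw [← hach]; noncomm_ring
    linear_combination (norm := noncomm_ring) this
  -- equal/above-block entries of Φx are those of the identity
  have hdiag : ∀ p q : Fin T × Fin n, (p.1 : ℕ) ≤ (q.1 : ℕ) →
      Φx p q = (1 : Matrix (Fin T × Fin n) (Fin T × Fin n) ℝ) p q := by
    intro p q hle
    rw [hsplit]
    simp [hZ, Matrix.add_apply, strict_lower A Φx hA hΦx p q hle,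
      strict_lower B Φu hB hΦu p q hle]
  -- block triangularity in mathlib's sense
  have hbt : Φx.BlockTriangular (fun p => OrderDual.toDual p.1) := by
    intro p q h
    exact hΦx p.1 q.1 p.2 q.2 h
  -- determinant is 1
  have hdet : Φx.det = 1 := by
    rw [hbt.det]
    apply Finset.prod_eq_one
    intro k _
    have : Φx.toSquareBlock (fun p => OrderDual.toDual p.1) k = 1 := by
      ext p q
      have hpq : (↑p : Fin T × Fin n).1 = (↑q : Fin T × Fin n).1 := by
        have hp := p.2; have hq := q.2
        simpa using hp.trans hq.symm
      have he := hdiag ↑p ↑q (le_of_eq (by rw [hpq]))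
      simp only [Matrix.toSquareBlock_def, Matrix.of_apply]
      rw [he]
      simp [Matrix.one_apply, Subtype.ext_iff]
    rw [this, Matrix.det_one]
  have hdetU : IsUnit Φx.det := by rw [hdet]; exact isUnit_one
  have hU : IsUnit Φx := (Matrix.isUnit_iff_isUnit_det Φx).2 hdetU
  haveI : Invertible Φx := Φx.invertibleOfIsUnitDet hdetU
  have hinv : Φx⁻¹.BlockTriangular (fun p => OrderDual.toDual p.1) :=
    Matrix.blockTriangular_inv_of_blockTriangular hbt
  have hK : IsBlockLowerTri (Φu * Φx⁻¹) := by
    intro i j a b hij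
    rw [Matrix.mul_apply]
    apply Finset.sum_eq_zero
    intro s _
    rcases lt_or_ge s.1 j with h | h
    · rw [show Φx⁻¹ s (j, b) = 0 from hinv h, mul_zero]
    · rw [show Φu (i, a) s = 0 from by
        rw [← Prod.mk.eta (p := s)]; exact hΦu i s.1 a s.2 (hij.trans_le h), zero_mul]
  have hKx : (Φu * Φx⁻¹) * Φx = Φu := by
    rw [Matrix.mul_assoc, Matrix.nonsing_inv_mul Φx hdetU, Matrix.mul_one]
  have hMx : (1 - Z * (A + B * (Φu * Φx⁻¹))) * Φx = 1 := by
    rw [Matrix.sub_mul, Matrix.one_mul, Matrix.mul_add, Matrix.add_mul,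
      ← Matrix.mul_assoc Z B (Φu * Φx⁻¹), Matrix.mul_assoc (Z * B) (Φu * Φx⁻¹) Φx, hKx,
      ← sub_sub]
    rw [← hach, Matrix.sub_mul, Matrix.one_mul]
  refine ⟨hU, hK, Matrix.inv_eq_right_inv hMx, ?_⟩
  rw [Matrix.inv_eq_right_inv hMx, hKx]
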